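/- For every λ ∈ (0, 1) there exists n₀ ∈ ℕ such that the n₀-th iterate of the logistic map satisfies α_λ^{n₀}([λ, 1]) = [0, λ], where α_λ(x) = 4λx(1-x). -/

import Mathlib

private lemma logmap_cont (lam : ℝ) :
    Continuous (fun x : ℝ => 4 * lam * x * (1 - x)) := by continuity

/-- If `1/2 ≤ b ≤ 1`, the image of `[0,b]` is `[0,lam]`. -/
private lemma img_half (lam b : ℝ) (h0 : 0 < lam) (hb2 : 1/2 ≤ b) (hbl : b ≤ 1) :
    (fun x : ℝ => 4 * lam * x * (1 - x)) '' Set.Icc 0 b = Set.Icc 0 lam := by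
  apply Set.Subset.antisymm
  · rintro y ⟨x, ⟨hx0, hxb⟩, rfl⟩
    have hx1 : x ≤ 1 := hxb.trans hbl
    dsimp only
    constructor
    · nlinarith [mul_nonneg (mul_nonneg h0.le hx0) (by linarith : (0:ℝ) ≤ 1 - x)]
    · nlinarith [mul_nonneg h0.le (sq_nonneg (1 - 2*x))]
  · have h := intermediate_value_Icc (by linarith : (0:ℝ) ≤ 1/2)
      (logmap_cont lam).continuousOn
    have h0' : (4 : ℝ) * lam * 0 * (1 - 0) = 0 := by ring
    have h2' : (4 : ℝ) * lam * (1/2) * (1 - 1/2) = lam := by ring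
    simp only [h0', h2'] at h
    exact h.trans (Set.image_mono (Set.Icc_subset_Icc le_rfl hb2))

/-- If `0 ≤ b ≤ 1/2`, the image of `[0,b]` is `[0, f b]`. -/
private lemma img_small (lam b : ℝ) (h0 : 0 < lam) (hb0 : 0 ≤ b) (hb2 : b ≤ 1/2) :
    (fun x : ℝ => 4 * lam * x * (1 - x)) '' Set.Icc 0 b
      = Set.Icc 0 (4 * lam * b * (1 - b)) := by
  apply Set.Subset.antisymm
  · rintro y ⟨x, ⟨hx0, hxb⟩, rfl⟩
    dsimp only
    constructor
    · have hx1 : x ≤ 1 := by linarith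
      nlinarith [mul_nonneg (mul_nonneg h0.le hx0) (by linarith : (0:ℝ) ≤ 1 - x)]
    · have h1 : 0 ≤ (b - x) * (1 - b - x) :=
        mul_nonneg (by linarith) (by linarith)
      nlinarith
  · have h := intermediate_value_Icc hb0 (logmap_cont lam).continuousOn
    have h0' : (4 : ℝ) * lam * 0 * (1 - 0) = 0 := by ring
    simp only [h0'] at h
    exact h

private lemma grow (lam : ℝ) (h0 : 1/2 < lam) (h1 : lam < 1) :
    ∀ n : ℕ, ∀ b : ℝ, 0 < b → b ≤ lam → 1/2 ≤ (2*lam)^n * b →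
    ∃ m : ℕ, (fun x : ℝ => 4 * lam * x * (1 - x))^[m] '' Set.Icc 0 b = Set.Icc 0 lam := by
  intro n
  induction n with
  | zero =>
    intro b hb0 hbl hpow
    simp only [pow_zero, one_mul] at hpow
    exact ⟨1, by rw [Function.iterate_one]; exact img_half lam b (by linarith) hpow (by linarith)⟩
  | succ n ih =>
    intro b hb0 hbl hpow
    by_cases hcase : 1/2 ≤ b
    · exact ⟨1, by rw [Function.iterate_one]; exact img_half lam b (by linarith) hcase (by linarith)⟩
    · push_neg at hcase
      set b' := 4 * lam * b * (1 - b) with hb'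
      have hb'0 : 0 < b' := by
        rw [hb']
        exact mul_pos (mul_pos (by linarith : (0:ℝ) < 4 * lam) hb0) (by linarith)
      have hb'l : b' ≤ lam := by
        rw [hb']
        nlinarith [mul_nonneg (by linarith : (0:ℝ) ≤ lam) (sq_nonneg (1 - 2*b))]
      have hstep : 2 * lam * b ≤ b' := by
        rw [hb']; nlinarith
      have hpow' : 1/2 ≤ (2*lam)^n * b' := by
        have hpn : (0:ℝ) ≤ (2*lam)^n := by positivity
        have : (2*lam)^(n+1) * b = (2*lam)^n * (2*lam*b) := by ring
        nlinarith [mul_le_mul_of_nonneg_left hstep hpn]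
      obtain ⟨m, hm⟩ := ih b' hb'0 hb'l hpow'
      refine ⟨m + 1, ?_⟩
      rw [Function.iterate_succ, Set.image_comp,
        img_small lam b (by linarith) hb0.le hcase.le, ← hb', hm]

/-- for every `0 < λ < 1` there is `n₀ ∈ ℕ` with
`α_λ^{n₀}([λ,1]) = [0,λ]`, where `α_λ(x) = 4λx(1-x)` is the logistic map. -/
theorem stmt16 (lam : ℝ) (h0 : 0 < lam) (h1 : lam < 1) :
    ∃ n0 : ℕ, (fun x : ℝ => 4 * lam * x * (1 - x))^[n0] '' Set.Icc lam 1 = Set.Icc 0 lam := by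
  by_cases hle : lam ≤ 1/2
  · refine ⟨1, ?_⟩
    rw [Function.iterate_one]
    apply Set.Subset.antisymm
    · rintro y ⟨x, ⟨hxl, hx1⟩, rfl⟩
      have hx0 : 0 ≤ x := by linarith
      dsimp only
      constructor
      · nlinarith [mul_nonneg (mul_nonneg h0.le hx0) (by linarith : (0:ℝ) ≤ 1 - x)]
      · nlinarith [mul_nonneg h0.le (sq_nonneg (1 - 2*x))]
    · have h := intermediate_value_Icc' (by linarith : (1:ℝ)/2 ≤ 1)
        (logmap_cont lam).continuousOn
      have h0' : (4 : ℝ) * lam * 1 * (1 - 1) = 0 := by ring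
      have h2' : (4 : ℝ) * lam * (1/2) * (1 - 1/2) = lam := by ring
      simp only [h0', h2'] at h
      exact h.trans (Set.image_mono (Set.Icc_subset_Icc hle le_rfl))
  · push_neg at hle
    -- first step: image of [lam, 1] is [0, f lam]
    set b := 4 * lam * lam * (1 - lam) with hb
    have hb0 : 0 < b := by
      rw [hb]
      exact mul_pos (mul_pos (by linarith : (0:ℝ) < 4 * lam) h0) (by linarith)
    have hbl : b ≤ lam := by
      rw [hb]; nlinarith [mul_nonneg h0.le (sq_nonneg (1 - 2*lam))]
    have hfirst : (fun x : ℝ => 4 * lam * x * (1 - x)) '' Set.Icc lam 1 = Set.Icc 0 b := by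
      apply Set.Subset.antisymm
      · rintro y ⟨x, ⟨hxl, hx1⟩, rfl⟩
        have hx0 : 0 ≤ x := by linarith
        dsimp only
        rw [hb]
        constructor
        · nlinarith [mul_nonneg (mul_nonneg h0.le hx0) (by linarith : (0:ℝ) ≤ 1 - x)]
        · have h1 : 0 ≤ (x - lam) * (x + lam - 1) :=
            mul_nonneg (by linarith) (by linarith)
          nlinarith
      · have h := intermediate_value_Icc' (by linarith : lam ≤ 1)
          (logmap_cont lam).continuousOn
        have h0' : (4 : ℝ) * lam * 1 * (1 - 1) = 0 := by ring
        simp only [h0'] at h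
        exact h
    obtain ⟨n, hn⟩ := pow_unbounded_of_one_lt (1 / (2 * b)) (by linarith : (1:ℝ) < 2 * lam)
    have hpow : 1/2 ≤ (2*lam)^n * b := by
      rw [div_lt_iff₀ (by linarith : (0:ℝ) < 2 * b)] at hn
      nlinarith
    obtain ⟨m, hm⟩ := grow lam hle h1 n b hb0 hbl hpow
    refine ⟨m + 1, ?_⟩
    rw [Function.iterate_succ, Set.image_comp, hfirst, hm]
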